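/- Let s,x,y,t ∈ ℂ with sy+xt+1 = x^2+y^2, and consider the symmetric domain-3 signature of arity n determined by values g_{i,j,k} (i+j+k = n) satisfying the three Fibonacci recurrences with parameters s,x,y,t. Then g is uniquely determined by its three 'top' values g_{n,0,0}, g_{n-1,1,0}, g_{n-1,0,1}: any two signatures of arity n satisfying the recurrences with the same parameters and agreeing on these three values are equal. -/
import Mathlib


theorem stmt_16 (s x y t : ℂ) (hst : s*y + x*t + 1 = x^2 + y^2)
    (n : ℕ) (g1 g2 : ℕ → ℕ → ℕ → ℂ)
    (hg1 : ∀ i j k : ℕ, i + j + k + 2 = n →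
      (g1 i (j+2) k = g1 (i+2) j k + s * g1 (i+1) (j+1) k + x * g1 (i+1) j (k+1)) ∧
      (g1 i (j+1) (k+1) = x * g1 (i+1) (j+1) k + y * g1 (i+1) j (k+1)) ∧
      (g1 i j (k+2) = g1 (i+2) j k + y * g1 (i+1) (j+1) k + t * g1 (i+1) j (k+1)))
    (hg2 : ∀ i j k : ℕ, i + j + k + 2 = n →
      (g2 i (j+2) k = g2 (i+2) j k + s * g2 (i+1) (j+1) k + x * g2 (i+1) j (k+1)) ∧
      (g2 i (j+1) (k+1) = x * g2 (i+1) (j+1) k + y * g2 (i+1) j (k+1)) ∧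
      (g2 i j (k+2) = g2 (i+2) j k + y * g2 (i+1) (j+1) k + t * g2 (i+1) j (k+1)))
    (htop1 : g1 n 0 0 = g2 n 0 0)
    (htop2 : g1 (n-1) 1 0 = g2 (n-1) 1 0)
    (htop3 : g1 (n-1) 0 1 = g2 (n-1) 0 1) :
    ∀ i j k : ℕ, i + j + k = n → g1 i j k = g2 i j k := by
  suffices h : ∀ m, ∀ i j k, j + k = m → i + j + k = n → g1 i j k = g2 i j k by
    intro i j k hn; exact h (j+k) i j k rfl hn
  intro m
  induction m using Nat.strong_induction_on with
  | _ m ih =>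
    intro i j k hm hn
    match j, k with
    | 0, 0 =>
      have : i = n := by omega
      subst this; exact htop1
    | 1, 0 =>
      have : i = n - 1 := by omega
      subst this; exact htop2
    | 0, 1 =>
      have : i = n - 1 := by omega
      subst this; exact htop3
    | j+2, k =>
      have hn2 : i + j + k + 2 = n := by omega
      have e1 := ih (j+k) (by omega) (i+2) j k rfl (by omega)
      have e2 := ih (j+1+k) (by omega) (i+1) (j+1) k rfl (by omega)
      have e3 := ih (j+(k+1)) (by omega) (i+1) j (k+1) rfl (by omega)
      rw [(hg1 i j k hn2).1, (hg2 i j k hn2).1, e1, e2, e3]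
    | 1, k+1 =>
      have hn2 : i + 0 + k + 2 = n := by omega
      have e2 := ih (1+k) (by omega) (i+1) 1 k rfl (by omega)
      have e3 := ih (0+(k+1)) (by omega) (i+1) 0 (k+1) rfl (by omega)
      rw [(hg1 i 0 k hn2).2.1, (hg2 i 0 k hn2).2.1, e2, e3]
    | 0, k+2 =>
      have hn2 : i + 0 + k + 2 = n := by omega
      have e1 := ih (0+k) (by omega) (i+2) 0 k rfl (by omega)
      have e2 := ih (1+k) (by omega) (i+1) 1 k rfl (by omega)
      have e3 := ih (0+(k+1)) (by omega) (i+1) 0 (k+1) rfl (by omega)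
      rw [(hg1 i 0 k hn2).2.2, (hg2 i 0 k hn2).2.2, e1, e2, e3]
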